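/- Let m ≥ 1 be an integer and let a, b, c, d, h, x, s be nonnegative integers (s may be rational) satisfying: (1) a + b + c + d = m; (2) a = c + 2d + 1; (3) h ≤ 2c + 3d + 1; (4) x ≤ b; (5) x ≤ 3h; and (6) s ≥ 3a + b − x. Then s ≥ 3m/8. -/
import Mathlib

theorem s_ge_three_m_div_eight (m a b c d h x : ℕ) (s : ℚ)
    (hm : 1 ≤ m)
    (h1 : a + b + c + d = m)
    (h2 : a = c + 2 * d + 1)
    (h3 : h ≤ 2 * c + 3 * d + 1)
    (h4 : x ≤ b)
    (h5 : x ≤ 3 * h)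
    (h6 : 3 * (a : ℚ) + (b : ℚ) - (x : ℚ) ≤ s) :
    3 * (m : ℚ) / 8 ≤ s := by
  have h1' : (a : ℚ) + b + c + d = m := by exact_mod_cast h1
  have h2' : (a : ℚ) = c + 2 * d + 1 := by exact_mod_cast h2
  have h3' : (h : ℚ) ≤ 2 * c + 3 * d + 1 := by exact_mod_cast h3
  have h4' : (x : ℚ) ≤ b := by exact_mod_cast h4
  have h5' : (x : ℚ) ≤ 3 * h := by exact_mod_cast h5
  have hd : (0:ℚ) ≤ d := by positivity
  have hc : (0:ℚ) ≤ c := by positivity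
  linarith
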